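/- Under Assumption 1, for every n ∈ ℕ the function v_n: Δ(Ω) → ℝ is upper semicontinuous. -/

import Mathlib

open Filter Topology
open scoped Classical

noncomputable section

/-- Δ(Ω): beliefs, i.e. probability distributions on the finite state space Ω,
as a subspace of Ω → ℝ (its topology agrees with the total-variation one). -/
abbrev Belief (Ω : Type*) [Fintype Ω] :=
  {p : Ω → ℝ // (∀ ω, 0 ≤ p ω) ∧ ∑ ω, p ω = 1}

variable {Ω : Type*} [Fintype Ω]

/-- An element of F₀: a finite-support experiment, i.e. a finitely supported probability
distribution over beliefs (keys are the distinct posteriors p_j, values the positive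
weights λ_j). -/
structure SPExp (Ω : Type*) [Fintype Ω] where
  w : Belief Ω →₀ ℝ
  nonneg : ∀ p, 0 ≤ w p
  sum_one : ∑ p ∈ w.support, w p = 1

namespace SPExp

/-- τ(e): the support of an experiment. -/
def tau (e : SPExp Ω) : Finset (Belief Ω) := e.w.support

/-- Expectation of a real-valued function under an experiment. -/
def expect (e : SPExp Ω) (f : Belief Ω → ℝ) : ℝ := ∑ p ∈ e.w.support, e.w p * f p

/-- σ(e): the barycenter (expectation) of an experiment. -/
def sigma (e : SPExp Ω) : Belief Ω :=
  ⟨fun ω => ∑ p ∈ e.w.support, e.w p * p.val ω,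
   fun ω => Finset.sum_nonneg fun p _ => mul_nonneg (e.nonneg p) (p.2.1 ω),
   by
     calc ∑ ω, ∑ p ∈ e.w.support, e.w p * p.val ω
         = ∑ p ∈ e.w.support, ∑ ω, e.w p * p.val ω := Finset.sum_comm
       _ = ∑ p ∈ e.w.support, e.w p * ∑ ω, p.val ω := by
           refine Finset.sum_congr rfl fun p _ => ?_
           rw [Finset.mul_sum]
       _ = ∑ p ∈ e.w.support, e.w p := by
           refine Finset.sum_congr rfl fun p _ => ?_
           rw [p.2.2, mul_one]
       _ = 1 := e.sum_one⟩

/-- The trivial experiment (1, p). -/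
def triv (p : Belief Ω) : SPExp Ω where
  w := Finsupp.single p 1
  nonneg := fun q => by
    rw [Finsupp.single_apply]
    split <;> norm_num
  sum_one := by
    rw [Finsupp.support_single_ne_zero _ one_ne_zero]
    simp

end SPExp

/-- T: the set of trivial experiments. -/
def Trivials (Ω : Type*) [Fintype Ω] : Set (SPExp Ω) := Set.range SPExp.triv

/-- Weak convergence of experiments, viewed as Borel probability measures on Δ(Ω). -/
def WeakTendsto (es : ℕ → SPExp Ω) (e : SPExp Ω) : Prop :=
  ∀ f : Belief Ω → ℝ, Continuous f →
    Tendsto (fun i => (es i).expect f) atTop (𝓝 (e.expect f))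

/-- Convergence of beliefs in total variation. -/
def TVTendsto (ps : ℕ → Belief Ω) (p : Belief Ω) : Prop :=
  Tendsto (fun i => ∑ ω, |(ps i).val ω - p.val ω|) atTop (𝓝 0)

/-- Histories, most recent step first: entries are (experiment taken, realized posterior);
the starting belief is kept separately. -/
abbrev Hist (Ω : Type*) [Fintype Ω] := List (SPExp Ω × Belief Ω)

/-- last(ξ): the current belief after history ξ started at μ. -/
def lastBelief (μ : Belief Ω) : Hist Ω → Belief Ω
  | [] => μ
  | (_, p) :: _ => p

/-- Pr[ξ]: the probability of a history. -/
def histProb : Hist Ω → ℝ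
  | [] => 1
  | (e, p) :: ξ => e.w p * histProb ξ

/-- A sequential persuasion starting from μ with feasible experiments F, given by its
history-dependent choice of the next (feasible, Bayes-plausible) experiment.  An n-step
sequential persuasion is such a strategy used for n steps; an infinite sequential
persuasion is the strategy itself. -/
structure SeqP {Ω : Type*} [Fintype Ω] (F : Set (SPExp Ω)) (μ : Belief Ω) where
  next : Hist Ω → SPExp Ω
  feasible : ∀ ξ, next ξ ∈ F
  bayes : ∀ ξ, (next ξ).sigma = lastBelief μ ξ

variable {F : Set (SPExp Ω)} {μ : Belief Ω}

/-- Expectation of g over the n-step histories of S extending ξ. -/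
def histExp (S : SeqP F μ) (g : Hist Ω → ℝ) : ℕ → Hist Ω → ℝ
  | 0, ξ => g ξ
  | n + 1, ξ => (S.next ξ).expect fun p => histExp S g n ((S.next ξ, p) :: ξ)

/-- Ξ_n: the set of n-step histories of S. -/
def Hists (S : SeqP F μ) : ℕ → Set (Hist Ω)
  | 0 => {[]}
  | n + 1 => {ξ' | ∃ ξ ∈ Hists S n, ∃ p ∈ (S.next ξ).tau, ξ' = (S.next ξ, p) :: ξ}

/-- ξ padded by l trivial steps. -/
def padHist (μ : Belief Ω) (ξ : Hist Ω) (l : ℕ) : Hist Ω :=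
  List.replicate l (SPExp.triv (lastBelief μ ξ), lastBelief μ ξ) ++ ξ

/-- S terminates after ξ: all subsequent choices (along trivial continuations of ξ)
are the trivial experiment. -/
def TerminatesAfter (S : SeqP F μ) (ξ : Hist Ω) : Prop :=
  ∀ l : ℕ, S.next (padHist μ ξ l) = SPExp.triv (lastBelief μ ξ)

/-- 𝒱(S⁽ⁿ⁾) = E[v(b_n)], the expected utility of the n-step persuasion given by the
first n steps of S. -/
def stepUtility (v : Belief Ω → ℝ) (S : SeqP F μ) (n : ℕ) : ℝ :=
  histExp S (fun ξ => v (lastBelief μ ξ)) n []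

/-- Pr[S terminates after n steps]. -/
def termProb (S : SeqP F μ) (n : ℕ) : ℝ :=
  histExp S (fun ξ => if TerminatesAfter S ξ then 1 else 0) n []

/-- 𝒱(S) for an infinite sequential persuasion S. -/
def infUtility (v : Belief Ω → ℝ) (S : SeqP F μ) : ℝ :=
  ⨆ n : ℕ, histExp S (fun ξ => if TerminatesAfter S ξ then v (lastBelief μ ξ) else 0) n []

/-- Pr[b_n ∈ O] for the belief b_n induced by S after n steps. -/
def massIn (S : SeqP F μ) (O : Set (Belief Ω)) (n : ℕ) : ℝ :=
  histExp S (fun ξ => if lastBelief μ ξ ∈ O then 1 else 0) n []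

/-- v_n(p): the optimal value over n-step sequential persuasions starting from p. -/
def vN (F : Set (SPExp Ω)) (v : Belief Ω → ℝ) (n : ℕ) (p : Belief Ω) : ℝ :=
  ⨆ S : SeqP F p, stepUtility v S n

/-- v_∞(p): the optimal value over infinite sequential persuasions starting from p. -/
def vInf (F : Set (SPExp Ω)) (v : Belief Ω → ℝ) (p : Belief Ω) : ℝ :=
  ⨆ S : SeqP F p, infUtility v S

/-- Assumption 1: a uniform support bound h, and weak closedness of F. -/
def Assumption1 (F : Set (SPExp Ω)) (h : ℕ) : Prop :=
  (∀ e ∈ F, e.tau.card ≤ h) ∧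
  ∀ es : ℕ → SPExp Ω, (∀ i, es i ∈ F) → ∀ e : SPExp Ω, WeakTendsto es e → e ∈ F

/-- Shannon entropy of a belief. -/
def entropy (p : Belief Ω) : ℝ := -∑ ω, p.val ω * Real.log (p.val ω)

/-- Assumption 2: every nontrivial feasible experiment lowers expected entropy by δ. -/
def Assumption2 (F : Set (SPExp Ω)) (δ : ℝ) : Prop :=
  ∀ e ∈ F \ Trivials Ω, e.expect entropy ≤ entropy e.sigma - δ

/-- S is (effectively) an n-step sequential persuasion: after n steps it only takes
trivial experiments. -/
def IsNStep (S : SeqP F μ) (n : ℕ) : Prop :=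
  ∀ ξ : Hist Ω, n ≤ ξ.length → S.next ξ = SPExp.triv (lastBelief μ ξ)

/-- Assumption 3 at prior μ: a sequence of finite-step sequential persuasions whose
values tend to v_∞(μ) and which terminate at a uniform rate. -/
def Assumption3 (F : Set (SPExp Ω)) (v : Belief Ω → ℝ) (μ : Belief Ω) : Prop :=
  ∃ (nk : ℕ → ℕ) (Sk : ℕ → SeqP F μ),
    (∀ k, IsNStep (Sk k) (nk k)) ∧
    Tendsto (fun k => stepUtility v (Sk k) (nk k)) atTop (𝓝 (vInf F v μ)) ∧
    ∀ ε : ℝ, 0 < ε → ∃ N : ℕ, ∀ k, N ≤ nk k → 1 - ε ≤ termProb (Sk k) N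

/-- v̂: the concave closure of v (the value of unconstrained Bayesian persuasion). -/
def concaveClosure (v : Belief Ω → ℝ) (p : Belief Ω) : ℝ :=
  sSup {x : ℝ | ∃ e : SPExp Ω, e.sigma = p ∧ x = e.expect v}

/-- O is implementable for (μ, F). -/
def Implementable (F : Set (SPExp Ω)) (μ : Belief Ω) (O : Set (Belief Ω)) : Prop :=
  ∀ ε : ℝ, 0 < ε → ∃ (n : ℕ) (S : SeqP F μ), 1 - ε < massIn S O n

/-- S is a Markov sequential persuasion compatible with (μ, D, Z, ρ). -/
def MarkovCompatible (S : SeqP F μ) (D Z : Set (Belief Ω)) (ρ : Belief Ω → SPExp Ω) : Prop :=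
  ∀ ξ : Hist Ω,
    (lastBelief μ ξ ∈ D → S.next ξ = ρ (lastBelief μ ξ)) ∧
    (lastBelief μ ξ ∈ Z → S.next ξ = SPExp.triv (lastBelief μ ξ))

/-- The j-th child of vertex m at depth n of the infinite h-ary tree. -/
def treeChild {h n : ℕ} (m : Fin (h ^ n)) (j : Fin h) : Fin (h ^ (n + 1)) :=
  ⟨m.val * h + j.val, by
    have h1 : m.val + 1 ≤ h ^ n := m.isLt
    have h2 : j.val < h := j.isLt
    calc m.val * h + j.val < m.val * h + h := by omega
      _ = (m.val + 1) * h := by ring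
      _ ≤ h ^ n * h := Nat.mul_le_mul h1 le_rfl
      _ = h ^ (n + 1) := (pow_succ h n).symm⟩

/-- An h-branching sequential persuasion starting from μ. -/
structure HBranch (Ω : Type*) [Fintype Ω] (F : Set (SPExp Ω)) (h : ℕ) (μ : Belief Ω) where
  π : ∀ n : ℕ, Fin (h ^ n) → ℝ
  β : ∀ n : ℕ, Fin (h ^ n) → Belief Ω
  η : ∀ n : ℕ, Fin (h ^ n) → SPExp Ω
  π_nonneg : ∀ n m, 0 ≤ π n m
  π_sum : ∀ n : ℕ, ∑ m, π n m = 1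
  η_mem : ∀ n m, η n m ∈ F
  β_root : ∀ m, β 0 m = μ
  compat_sigma : ∀ n m, (η n m).sigma = β n m
  compat_tau : ∀ (n : ℕ) (m : Fin (h ^ n)), ∀ p ∈ (η n m).tau,
    ∃ j : Fin h, β (n + 1) (treeChild m j) = p
  consistent : ∀ (n : ℕ) (m : Fin (h ^ n)) (p : Belief Ω),
    (∑ j : Fin h, if β (n + 1) (treeChild m j) = p then π (n + 1) (treeChild m j) else 0)
      = π n m * (η n m).w p

/-- c' (at depth n + l) is a descendant of c (at depth n) in the h-ary tree. -/
def Descendant {h : ℕ} : {n : ℕ} → (l : ℕ) → Fin (h ^ n) → Fin (h ^ (n + l)) → Prop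
  | _, 0, c, c' => c = c'
  | _, l + 1, c, c' => ∃ c'' j, Descendant l c c'' ∧ c' = treeChild c'' j

namespace HBranch

variable {h : ℕ}

/-- B terminates after vertex m at depth n. -/
def TermAfter (B : HBranch Ω F h μ) (n : ℕ) (m : Fin (h ^ n)) : Prop :=
  B.η n m ∈ Trivials Ω ∧
  ∀ (l : ℕ) (c' : Fin (h ^ (n + l))), Descendant l m c' → 0 < B.π (n + l) c' →
    B.η (n + l) c' ∈ Trivials Ω

/-- Pr[B terminates after n steps]. -/
def termProb (B : HBranch Ω F h μ) (n : ℕ) : ℝ :=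
  ∑ m : Fin (h ^ n), if B.TermAfter n m then B.π n m else 0

end HBranch

/-- B represents the infinite sequential persuasion S (via maps r_n : C_n → Ξ_n). -/
def Represents (S : SeqP F μ) {h : ℕ} (B : HBranch Ω F h μ) : Prop :=
  ∃ r : ∀ n : ℕ, Fin (h ^ n) → Hist Ω,
    ∀ n : ℕ,
      (∀ c, r n c ∈ Hists S n) ∧
      (∀ ξ ∈ Hists S n, histProb ξ = ∑ c, if r n c = ξ then B.π n c else 0) ∧
      (∀ c, lastBelief μ (r n c) = B.β n c ∧ S.next (r n c) = B.η n c) ∧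
      (∀ l : ℕ, ∀ ξ ∈ Hists S n, ∀ ξ' ∈ Hists S (n + l),
        (ξ <:+ ξ' ↔
          ∀ c' : Fin (h ^ (n + l)), r (n + l) c' = ξ' →
            ∃ c : Fin (h ^ n), r n c = ξ ∧ Descendant l c c'))

/-- The number of nontrivial experiments taken along a history. -/
def nontrivCount (ξ : Hist Ω) : ℕ :=
  ξ.countP fun s => decide (s.1 ∉ Trivials Ω)

end
noncomputable section Aux

open SPExp

variable {Ω : Type*} [Fintype Ω]

lemma SPExp.expect_le {e : SPExp Ω} {f : Belief Ω → ℝ} {B : ℝ} (hf : ∀ p, f p ≤ B) :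
    e.expect f ≤ B := by
  calc e.expect f ≤ ∑ p ∈ e.w.support, e.w p * B :=
        Finset.sum_le_sum fun p _ => mul_le_mul_of_nonneg_left (hf p) (e.nonneg p)
    _ = B := by rw [← Finset.sum_mul, e.sum_one, one_mul]

lemma SPExp.le_expect {e : SPExp Ω} {f : Belief Ω → ℝ} {A : ℝ} (hf : ∀ p, A ≤ f p) :
    A ≤ e.expect f := by
  calc A = ∑ p ∈ e.w.support, e.w p * A := by rw [← Finset.sum_mul, e.sum_one, one_mul]
    _ ≤ e.expect f :=
        Finset.sum_le_sum fun p _ => mul_le_mul_of_nonneg_left (hf p) (e.nonneg p)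

lemma SPExp.expect_mono {e : SPExp Ω} {f g : Belief Ω → ℝ} (hfg : ∀ p, f p ≤ g p) :
    e.expect f ≤ e.expect g :=
  Finset.sum_le_sum fun p _ => mul_le_mul_of_nonneg_left (hfg p) (e.nonneg p)

lemma SPExp.expect_add_const (e : SPExp Ω) (f : Belief Ω → ℝ) (c : ℝ) :
    e.expect (fun p => f p + c) = e.expect f + c := by
  unfold SPExp.expect
  have : ∀ p ∈ e.w.support, e.w p * (f p + c) = e.w p * f p + e.w p * c := fun p _ => by ring
  rw [Finset.sum_congr rfl this, Finset.sum_add_distrib, ← Finset.sum_mul, e.sum_one, one_mul]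

lemma SPExp.sigma_coord (e : SPExp Ω) (ω : Ω) :
    (e.sigma).val ω = e.expect (fun r => r.val ω) := rfl

lemma SPExp.sigma_triv (p : Belief Ω) : (SPExp.triv p).sigma = p := by
  apply Subtype.ext
  funext ω
  show ∑ q ∈ (Finsupp.single p (1:ℝ)).support, (Finsupp.single p (1:ℝ)) q * q.val ω = p.val ω
  rw [Finsupp.support_single_ne_zero _ one_ne_zero]
  simp

lemma triv_mem_trivials (p : Belief Ω) : SPExp.triv p ∈ Trivials Ω := ⟨p, rfl⟩

lemma SPExp.tau_triv (p : Belief Ω) : (SPExp.triv p).tau = {p} := by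
  show (Finsupp.single p (1:ℝ)).support = {p}
  exact Finsupp.support_single_ne_zero _ one_ne_zero

lemma SPExp.support_nonempty (e : SPExp Ω) : e.w.support.Nonempty := by
  by_contra hne
  rw [Finset.not_nonempty_iff_eq_empty] at hne
  have := e.sum_one
  rw [hne] at this
  simp at this

end Aux
noncomputable section Aux2

open SPExp

variable {Ω : Type*} [Fintype Ω]

lemma SPExp.exists_tuple (e : SPExp Ω) {h : ℕ} (hcard : e.w.support.card ≤ h) :
    ∃ (l : Fin h → ℝ) (q : Fin h → Belief Ω),
      (∀ j, 0 ≤ l j) ∧ (∑ j, l j = 1) ∧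
      ∀ f : Belief Ω → ℝ, e.expect f = ∑ j, l j * f (q j) := by
  classical
  have hne : e.w.support.Nonempty := e.support_nonempty
  haveI : Nonempty ↥e.w.support := ⟨⟨hne.choose, hne.choose_spec⟩⟩
  have hcard' : Fintype.card ↥e.w.support ≤ Fintype.card (Fin h) := by
    rwa [Fintype.card_coe, Fintype.card_fin]
  obtain ⟨emb⟩ := Function.Embedding.nonempty_of_card_le hcard'
  set g : Fin h → ↥e.w.support := Function.invFun emb with hg
  have hginv : ∀ p : ↥e.w.support, g (emb p) = p := Function.leftInverse_invFun emb.injective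
  set l : Fin h → ℝ := fun j => if j ∈ Finset.univ.image emb then e.w ((g j : Belief Ω)) else 0
    with hldef
  have master : ∀ f : Belief Ω → ℝ,
      ∑ j, l j * f ((g j : Belief Ω)) = ∑ p ∈ e.w.support, e.w p * f p := by
    intro f
    have h1 : ∀ j : Fin h, l j * f ((g j : Belief Ω)) =
        if j ∈ Finset.univ.image emb then e.w ((g j : Belief Ω)) * f ((g j : Belief Ω)) else 0 := by
      intro j; rw [hldef]; dsimp only; split <;> simp
    rw [Finset.sum_congr rfl fun j _ => h1 j, Finset.sum_ite_mem, Finset.univ_inter,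
      Finset.sum_image (fun x _ y _ hxy => emb.injective hxy)]
    rw [Finset.sum_congr rfl fun p _ => by rw [hginv p]]
    exact Finset.sum_coe_sort e.w.support (fun p => e.w p * f p)
  refine ⟨l, fun j => (g j : Belief Ω), fun j => ?_, ?_, fun f => ?_⟩
  · rw [hldef]; dsimp only; split
    · exact e.nonneg _
    · exact le_refl 0
  · have := master (fun _ => 1)
    simp only [mul_one] at this
    rw [this, e.sum_one]
  · exact (master f).symm

/-- The experiment built from a tuple of weights and posteriors. -/
def SPExp.ofTuple {h : ℕ} (l : Fin h → ℝ) (q : Fin h → Belief Ω)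
    (hl : ∀ j, 0 ≤ l j) (hsum : ∑ j, l j = 1) : SPExp Ω where
  w := ∑ j, Finsupp.single (q j) (l j)
  nonneg p := by
    rw [Finsupp.finset_sum_apply]
    exact Finset.sum_nonneg fun j _ => by
      rw [Finsupp.single_apply]; split
      · exact hl j
      · exact le_refl 0
  sum_one := by
    have : ((∑ j, Finsupp.single (q j) (l j)).sum fun _ a => a) = ∑ j, l j := by
      rw [← Finsupp.sum_finset_sum_index (fun _ => rfl) (fun _ _ _ => rfl)]
      exact Finset.sum_congr rfl fun j _ => Finsupp.sum_single_index rfl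
    simpa [Finsupp.sum] using this.trans hsum

lemma SPExp.ofTuple_expect {h : ℕ} (l : Fin h → ℝ) (q : Fin h → Belief Ω)
    (hl : ∀ j, 0 ≤ l j) (hsum : ∑ j, l j = 1) (f : Belief Ω → ℝ) :
    (SPExp.ofTuple l q hl hsum).expect f = ∑ j, l j * f (q j) := by
  show ((∑ j, Finsupp.single (q j) (l j)).support.sum fun p =>
      (∑ j, Finsupp.single (q j) (l j)) p * f p) = _
  have : ((∑ j, Finsupp.single (q j) (l j)).sum fun p a => a * f p) = ∑ j, l j * f (q j) := by
    rw [← Finsupp.sum_finset_sum_index (fun _ => by simp) (fun p a b => by ring)]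
    exact Finset.sum_congr rfl fun j _ => Finsupp.sum_single_index (by simp)
  simpa [Finsupp.sum] using this

end Aux2
noncomputable section Aux3

variable {Ω : Type*} [Fintype Ω]

lemma belief_le_one (p : Belief Ω) (ω : Ω) : p.val ω ≤ 1 := by
  have := Finset.single_le_sum (f := p.val) (fun ω' _ => p.2.1 ω') (Finset.mem_univ ω)
  rwa [p.2.2] at this

instance : CompactSpace (Belief Ω) := by
  have hsub : {p : Ω → ℝ | (∀ ω, 0 ≤ p ω) ∧ ∑ ω, p ω = 1} ⊆
      Set.pi Set.univ (fun _ : Ω => Set.Icc (0:ℝ) 1) := by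
    intro p hp ω _
    refine ⟨hp.1 ω, ?_⟩
    have := Finset.single_le_sum (f := p) (fun ω' _ => hp.1 ω') (Finset.mem_univ ω)
    rwa [hp.2] at this
  have hclosed : IsClosed {p : Ω → ℝ | (∀ ω, 0 ≤ p ω) ∧ ∑ ω, p ω = 1} := by
    have h1 : IsClosed {p : Ω → ℝ | ∀ ω, 0 ≤ p ω} := by
      rw [Set.setOf_forall]
      exact isClosed_iInter fun ω => isClosed_le continuous_const (continuous_apply ω)
    have h2 : IsClosed {p : Ω → ℝ | ∑ ω, p ω = 1} :=
      isClosed_eq (continuous_finset_sum _ fun ω _ => continuous_apply ω) continuous_const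
    exact (Set.setOf_and ▸ h1.inter h2 :)
  have hK : IsCompact {p : Ω → ℝ | (∀ ω, 0 ≤ p ω) ∧ ∑ ω, p ω = 1} :=
    (isCompact_univ_pi fun _ => isCompact_Icc).of_isClosed_subset hclosed hsub
  exact isCompact_iff_compactSpace.mp hK

end Aux3
noncomputable section Aux4

open SPExp

variable {Ω : Type*} [Fintype Ω] {F : Set (SPExp Ω)} {μ : Belief Ω}

/-- The strategy that always plays the trivial experiment. -/
def trivS (hTF : Trivials Ω ⊆ F) (μ : Belief Ω) : SeqP F μ where
  next ξ := SPExp.triv (lastBelief μ ξ)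
  feasible ξ := hTF ⟨_, rfl⟩
  bayes ξ := SPExp.sigma_triv _

lemma histExp_le {S : SeqP F μ} {g : Hist Ω → ℝ} {B : ℝ} (hg : ∀ ζ, g ζ ≤ B) :
    ∀ (n : ℕ) (ξ : Hist Ω), histExp S g n ξ ≤ B
  | 0, ξ => hg ξ
  | n + 1, ξ => SPExp.expect_le fun p => histExp_le hg n _

lemma le_histExp {S : SeqP F μ} {g : Hist Ω → ℝ} {A : ℝ} (hg : ∀ ζ, A ≤ g ζ) :
    ∀ (n : ℕ) (ξ : Hist Ω), A ≤ histExp S g n ξ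
  | 0, ξ => hg ξ
  | n + 1, ξ => SPExp.le_expect fun p => le_histExp hg n _

lemma stepUtility_le {v : Belief Ω → ℝ} {B : ℝ} (hv : ∀ p, v p ≤ B) (S : SeqP F μ) (n : ℕ) :
    stepUtility v S n ≤ B :=
  histExp_le (fun ζ => hv _) n []

lemma le_stepUtility {v : Belief Ω → ℝ} {A : ℝ} (hv : ∀ p, A ≤ v p) (S : SeqP F μ) (n : ℕ) :
    A ≤ stepUtility v S n :=
  le_histExp (fun ζ => hv _) n []

lemma bddAbove_stepUtility {v : Belief Ω → ℝ} {B : ℝ} (hv : ∀ p, v p ≤ B) (n : ℕ) :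
    BddAbove (Set.range fun S : SeqP F μ => stepUtility v S n) := by
  refine ⟨B, ?_⟩
  rintro x ⟨S, rfl⟩
  exact stepUtility_le hv S n

lemma vN_le {v : Belief Ω → ℝ} {B : ℝ} (hTF : Trivials Ω ⊆ F) (hv : ∀ p, v p ≤ B) (n : ℕ)
    (p : Belief Ω) : vN F v n p ≤ B := by
  haveI : Nonempty (SeqP F p) := ⟨trivS hTF p⟩
  exact ciSup_le fun S => stepUtility_le hv S n

lemma le_vN {v : Belief Ω → ℝ} {A B : ℝ} (hTF : Trivials Ω ⊆ F) (hvA : ∀ p, A ≤ v p)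
    (hvB : ∀ p, v p ≤ B) (n : ℕ) (p : Belief Ω) : A ≤ vN F v n p :=
  le_trans (le_stepUtility hvA (trivS hTF p) n)
    (le_ciSup (bddAbove_stepUtility hvB n) (trivS hTF p))

lemma lastBelief_concat (μ : Belief Ω) (l : Hist Ω) (a : SPExp Ω × Belief Ω) :
    lastBelief μ (l ++ [a]) = lastBelief a.2 l := by cases l <;> rfl

/-- The continuation strategy of S after an initial step a. -/
def SeqP.after (S : SeqP F μ) (a : SPExp Ω × Belief Ω) : SeqP F a.2 where
  next ξ := S.next (ξ ++ [a])
  feasible ξ := S.feasible _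
  bayes ξ := by rw [S.bayes, lastBelief_concat]

lemma histExp_after (S : SeqP F μ) (a : SPExp Ω × Belief Ω) (g : Hist Ω → ℝ) :
    ∀ (n : ℕ) (ξ : Hist Ω),
      histExp (S.after a) (fun ζ => g (ζ ++ [a])) n ξ = histExp S g n (ξ ++ [a])
  | 0, ξ => rfl
  | n + 1, ξ => by
    show SPExp.expect _ _ = SPExp.expect _ _
    have hnext : (S.after a).next ξ = S.next (ξ ++ [a]) := rfl
    rw [hnext]
    congr 1
    funext p
    rw [histExp_after S a g n ((S.next (ξ ++ [a]), p) :: ξ), List.cons_append]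

lemma stepUtility_after (v : Belief Ω → ℝ) (S : SeqP F μ) (a : SPExp Ω × Belief Ω) (n : ℕ) :
    stepUtility v (S.after a) n = histExp S (fun ξ => v (lastBelief μ ξ)) n [a] := by
  unfold stepUtility
  have hg : (fun ζ => v (lastBelief a.2 ζ)) =
      fun ζ => v (lastBelief μ (ζ ++ [a])) := funext fun ζ => by rw [lastBelief_concat]
  rw [hg]
  have h2 := histExp_after S a (fun ξ => v (lastBelief μ ξ)) n []
  rw [List.nil_append] at h2
  exact h2

lemma stepUtility_succ (v : Belief Ω → ℝ) (S : SeqP F μ) (n : ℕ) :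
    stepUtility v S (n + 1) =
      (S.next []).expect fun p => stepUtility v (S.after (S.next [], p)) n := by
  show ((S.next []).expect fun p =>
    histExp S (fun ξ => v (lastBelief μ ξ)) n [(S.next [], p)]) = _
  congr 1
  funext p
  rw [stepUtility_after]

end Aux4
noncomputable section Aux5

open SPExp

variable {Ω : Type*} [Fintype Ω] {F : Set (SPExp Ω)} {μ : Belief Ω}

def combNext (e : SPExp Ω) (σ : ∀ q : Belief Ω, SeqP F q) : Hist Ω → SPExp Ω := fun ξ =>
  match ξ.getLast? with
  | none => e
  | some a => (σ a.2).next ξ.dropLast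

lemma combNext_nil (e : SPExp Ω) (σ : ∀ q : Belief Ω, SeqP F q) : combNext e σ [] = e := rfl

lemma combNext_concat (e : SPExp Ω) (σ : ∀ q : Belief Ω, SeqP F q) (l : Hist Ω)
    (a : SPExp Ω × Belief Ω) : combNext e σ (l ++ [a]) = (σ a.2).next l := by
  simp [combNext, List.getLast?_concat, List.dropLast_concat]

/-- The strategy playing e first and then following σ q from posterior q. -/
def comb (e : SPExp Ω) (heF : e ∈ F) (he : e.sigma = μ) (σ : ∀ q : Belief Ω, SeqP F q) :
    SeqP F μ where
  next := combNext e σ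
  feasible ξ := by
    rcases List.eq_nil_or_concat ξ with rfl | ⟨l, a, rfl⟩
    · rw [combNext_nil]; exact heF
    · rw [List.concat_eq_append, combNext_concat]; exact (σ a.2).feasible l
  bayes ξ := by
    rcases List.eq_nil_or_concat ξ with rfl | ⟨l, a, rfl⟩
    · rw [combNext_nil]; exact he
    · rw [List.concat_eq_append, combNext_concat, (σ a.2).bayes, lastBelief_concat]

lemma histExp_comb (e : SPExp Ω) (heF : e ∈ F) (he : e.sigma = μ)
    (σ : ∀ q : Belief Ω, SeqP F q) (g : Hist Ω → ℝ) (a : SPExp Ω × Belief Ω) :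
    ∀ (n : ℕ) (l : Hist Ω),
      histExp (comb e heF he σ) g n (l ++ [a]) =
        histExp (σ a.2) (fun ζ => g (ζ ++ [a])) n l
  | 0, l => rfl
  | n + 1, l => by
    show SPExp.expect _ _ = SPExp.expect _ _
    have hnext : (comb e heF he σ).next (l ++ [a]) = (σ a.2).next l := combNext_concat _ _ _ _
    rw [hnext]
    congr 1
    funext p
    rw [← List.cons_append, histExp_comb e heF he σ g a n (((σ a.2).next l, p) :: l)]

lemma stepUtility_comb (v : Belief Ω → ℝ) (e : SPExp Ω) (heF : e ∈ F) (he : e.sigma = μ)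
    (σ : ∀ q : Belief Ω, SeqP F q) (n : ℕ) :
    stepUtility v (comb e heF he σ) (n + 1) = e.expect fun p => stepUtility v (σ p) n := by
  show ((comb e heF he σ).next []).expect
      (fun p => histExp (comb e heF he σ) (fun ξ => v (lastBelief μ ξ)) n
        [((comb e heF he σ).next [], p)]) = _
  have hnil : (comb e heF he σ).next [] = e := rfl
  rw [hnil]
  congr 1
  funext p
  have h1 := histExp_comb e heF he σ (fun ξ => v (lastBelief μ ξ)) (e, p) n []
  rw [List.nil_append] at h1
  rw [h1]
  unfold stepUtility
  congr 1
  funext ζ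
  rw [lastBelief_concat]

lemma vN_succ (hTF : Trivials Ω ⊆ F) (v : Belief Ω → ℝ) {A B : ℝ}
    (hvA : ∀ p, A ≤ v p) (hvB : ∀ p, v p ≤ B) (n : ℕ) (μ : Belief Ω) :
    vN F v (n + 1) μ =
      ⨆ e : {e : SPExp Ω // e ∈ F ∧ e.sigma = μ}, e.1.expect (vN F v n) := by
  haveI hne : ∀ q : Belief Ω, Nonempty (SeqP F q) := fun q => ⟨trivS hTF q⟩
  haveI : Nonempty {e : SPExp Ω // e ∈ F ∧ e.sigma = μ} :=
    ⟨⟨SPExp.triv μ, hTF ⟨μ, rfl⟩, SPExp.sigma_triv μ⟩⟩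
  have hbddE : BddAbove (Set.range fun e : {e : SPExp Ω // e ∈ F ∧ e.sigma = μ} =>
      e.1.expect (vN F v n)) := by
    refine ⟨B, ?_⟩
    rintro x ⟨e, rfl⟩
    exact SPExp.expect_le fun p => vN_le hTF hvB n p
  apply le_antisymm
  · refine ciSup_le fun S => ?_
    rw [stepUtility_succ]
    calc (S.next []).expect (fun p => stepUtility v (S.after (S.next [], p)) n)
        ≤ (S.next []).expect (vN F v n) :=
          SPExp.expect_mono fun p => le_ciSup (bddAbove_stepUtility hvB n) (S.after (S.next [], p))
      _ ≤ _ := le_ciSup hbddE ⟨S.next [], S.feasible [], S.bayes []⟩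
  · refine ciSup_le fun e => ?_
    obtain ⟨e, heF, heσ⟩ := e
    dsimp only
    refine le_of_forall_pos_le_add fun ε hε => ?_
    have hex : ∀ q : Belief Ω, ∃ S : SeqP F q, vN F v n q - ε < stepUtility v S n := by
      intro q
      exact exists_lt_of_lt_ciSup (sub_lt_self _ hε)
    set σ : ∀ q : Belief Ω, SeqP F q := fun q => (hex q).choose with hσ
    have hσ2 : ∀ q, vN F v n q ≤ stepUtility v (σ q) n + ε := fun q =>
      le_of_lt (sub_lt_iff_lt_add.mp (hex q).choose_spec)
    calc e.expect (vN F v n)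
        ≤ e.expect (fun q => stepUtility v (σ q) n + ε) := SPExp.expect_mono hσ2
      _ = e.expect (fun q => stepUtility v (σ q) n) + ε := SPExp.expect_add_const e _ ε
      _ = stepUtility v (comb e heF heσ σ) (n + 1) + ε := by rw [stepUtility_comb]
      _ ≤ vN F v (n + 1) μ + ε :=
          add_le_add_left
            (le_ciSup (bddAbove_stepUtility (μ := μ) hvB (n + 1)) (comb e heF heσ σ)) ε

end Aux5
noncomputable section Aux6

open SPExp

variable {Ω : Type*} [Fintype Ω] {F : Set (SPExp Ω)}

lemma usc_step (hTF : Trivials Ω ⊆ F) {g : Belief Ω → ℝ} {Vlo Vhi : ℝ} (hVlo : 0 < Vlo)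
    (hg1 : ∀ p, Vlo ≤ g p) (hg2 : ∀ p, g p ≤ Vhi)
    (hgusc : UpperSemicontinuous g) (h : ℕ) (hA1 : Assumption1 F h) :
    UpperSemicontinuous
      (fun p : Belief Ω => ⨆ e : {e : SPExp Ω // e ∈ F ∧ e.sigma = p}, e.1.expect g) := by
  classical
  set W : Belief Ω → ℝ :=
    fun p => ⨆ e : {e : SPExp Ω // e ∈ F ∧ e.sigma = p}, e.1.expect g with hW
  have hneW : ∀ p : Belief Ω, Nonempty {e : SPExp Ω // e ∈ F ∧ e.sigma = p} := fun p =>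
    ⟨⟨SPExp.triv p, hTF ⟨p, rfl⟩, SPExp.sigma_triv p⟩⟩
  have hbddW : ∀ p : Belief Ω,
      BddAbove (Set.range fun e : {e : SPExp Ω // e ∈ F ∧ e.sigma = p} => e.1.expect g) := by
    intro p
    refine ⟨Vhi, ?_⟩
    rintro x ⟨e, rfl⟩
    exact SPExp.expect_le hg2
  have hh : Belief Ω → 1 ≤ h := by
    intro p
    have hcard := hA1.1 (SPExp.triv p) (hTF ⟨_, rfl⟩)
    rwa [SPExp.tau_triv, Finset.card_singleton] at hcard
  intro p y hy
  replace hh := hh p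
  by_contra hcon
  obtain ⟨y', hy'1, hy'2⟩ := exists_between hy
  -- a sequence pk → p with y ≤ W (pk k)
  have hclos : p ∈ closure {x : Belief Ω | y ≤ W x} := by
    refine mem_closure_iff_frequently.mpr ?_
    exact (Filter.not_eventually.mp hcon).mono fun x hx => not_lt.mp hx
  obtain ⟨pk, hmem, htend⟩ := mem_closure_iff_seq_limit.mp hclos
  -- pick near-optimal experiments
  have H0 : ∀ k, ∃ e : SPExp Ω, (e ∈ F ∧ e.sigma = pk k) ∧ y' < e.expect g := by
    intro k
    haveI := hneW (pk k)
    obtain ⟨e, he⟩ := exists_lt_of_lt_ciSup (lt_of_lt_of_le hy'2 (hmem k))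
    exact ⟨e.1, e.2, he⟩
  choose ek hek hky using H0
  have ekF : ∀ k, ek k ∈ F := fun k => (hek k).1
  have ekσ : ∀ k, (ek k).sigma = pk k := fun k => (hek k).2
  -- tuple representations
  have H1 : ∀ k, ∃ (l : Fin h → ℝ) (q : Fin h → Belief Ω),
      (∀ j, 0 ≤ l j) ∧ (∑ j, l j = 1) ∧
      ∀ f : Belief Ω → ℝ, (ek k).expect f = ∑ j, l j * f (q j) := fun k =>
    (ek k).exists_tuple (hA1.1 (ek k) (ekF k))
  choose lk qk hlk hsk hrep using H1
  -- compactness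
  set K : Set ((Fin h → ℝ) × (Fin h → Belief Ω)) :=
    (Set.univ.pi fun _ => Set.Icc (0:ℝ) 1) ×ˢ Set.univ with hK
  have hKcomp : IsCompact K :=
    (isCompact_univ_pi fun _ => isCompact_Icc).prod isCompact_univ
  have hzK : ∀ k, (lk k, qk k) ∈ K := by
    intro k
    refine ⟨fun j _ => ⟨hlk k j, ?_⟩, Set.mem_univ _⟩
    calc lk k j ≤ ∑ j', lk k j' :=
        Finset.single_le_sum (fun j' _ => hlk k j') (Finset.mem_univ j)
      _ = 1 := hsk k
  obtain ⟨⟨li, qi⟩, hmemK, φ, hφ, hzt⟩ := hKcomp.tendsto_subseq hzK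
  have htl : ∀ j, Filter.Tendsto (fun i => lk (φ i) j) Filter.atTop (nhds (li j)) := fun j =>
    (((continuous_apply j).comp continuous_fst).tendsto _).comp hzt
  have htq : ∀ j, Filter.Tendsto (fun i => qk (φ i) j) Filter.atTop (nhds (qi j)) := fun j =>
    (((continuous_apply j).comp continuous_snd).tendsto _).comp hzt
  have hli : ∀ j, 0 ≤ li j := fun j => (hmemK.1 j (Set.mem_univ j)).1
  have hli1 : ∀ j, li j ≤ 1 := fun j => (hmemK.1 j (Set.mem_univ j)).2
  have hsi : ∑ j, li j = 1 := by
    have t1 : Filter.Tendsto (fun i => ∑ j, lk (φ i) j) Filter.atTop (nhds (∑ j, li j)) :=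
      tendsto_finset_sum _ fun j _ => htl j
    have t2 : Filter.Tendsto (fun i => ∑ j, lk (φ i) j) Filter.atTop (nhds 1) := by
      simp only [hsk]
      exact tendsto_const_nhds
    exact tendsto_nhds_unique t1 t2
  set ei : SPExp Ω := SPExp.ofTuple li qi hli hsi with hei
  have hei_expect : ∀ f : Belief Ω → ℝ, ei.expect f = ∑ j, li j * f (qi j) := fun f =>
    SPExp.ofTuple_expect li qi hli hsi f
  -- ei ∈ F via weak closedness
  have heiF : ei ∈ F := by
    refine hA1.2 (fun i => ek (φ i)) (fun i => ekF (φ i)) ei ?_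
    intro f hf
    rw [hei_expect f]
    simp only [hrep _ f]
    exact tendsto_finset_sum _ fun j _ =>
      (htl j).mul ((hf.tendsto (qi j)).comp (htq j))
  -- sigma ei = p
  have heiσ : ei.sigma = p := by
    apply Subtype.ext
    funext ω
    have t1 : Filter.Tendsto (fun i => ((pk (φ i)).val ω)) Filter.atTop (nhds (p.val ω)) :=
      (((continuous_apply ω).comp continuous_subtype_val).tendsto _).comp
        (htend.comp hφ.tendsto_atTop)
    have t2 : Filter.Tendsto (fun i => ((ek (φ i)).sigma.val ω)) Filter.atTop
        (nhds (ei.sigma.val ω)) := by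
      simp only [SPExp.sigma_coord, hrep, hei_expect]
      exact tendsto_finset_sum _ fun j _ =>
        (htl j).mul ((((continuous_apply ω).comp continuous_subtype_val).tendsto _).comp (htq j))
    simp only [ekσ] at t2
    exact tendsto_nhds_unique t2 t1
  -- y' ≤ ei.expect g
  have hkey : y' ≤ ei.expect g := by
    refine le_of_forall_pos_le_add fun ε hε => ?_
    have hhR : (0:ℝ) < h := by exact_mod_cast lt_of_lt_of_le one_pos hh
    have hεh : 0 < ε / h := div_pos hε hhR
    set δ : ℝ := min 1 ((ε / h) / (2 + Vhi)) with hδdef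
    have hVhi : 0 < Vhi := lt_of_lt_of_le hVlo (le_trans (hg1 p) (hg2 p))
    have hδ : 0 < δ := lt_min one_pos (div_pos hεh (by linarith))
    have hδ1 : δ ≤ 1 := min_le_left _ _
    have hδ2 : δ * (2 + Vhi) ≤ ε / h := by
      have := min_le_right (1:ℝ) ((ε / h) / (2 + Vhi))
      rw [← hδdef] at this
      calc δ * (2 + Vhi) ≤ ((ε / h) / (2 + Vhi)) * (2 + Vhi) :=
            mul_le_mul_of_nonneg_right this (by linarith)
        _ = ε / h := div_mul_cancel₀ _ (by linarith)
    have claim : ∀ j : Fin h, ∀ᶠ i in Filter.atTop,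
        lk (φ i) j * g (qk (φ i) j) ≤ li j * g (qi j) + ε / h := by
      intro j
      have h1 : ∀ᶠ i in Filter.atTop, g (qk (φ i) j) < g (qi j) + δ :=
        (htq j).eventually (hgusc (qi j) _ (lt_add_of_pos_right _ hδ))
      have h2 : ∀ᶠ i in Filter.atTop, lk (φ i) j < li j + δ :=
        (htl j).eventually (Filter.Tendsto.eventually_lt_const (lt_add_of_pos_right _ hδ)
          Filter.tendsto_id) |>.mono fun i hi => hi
      filter_upwards [h1, h2] with i hi1 hi2
      have hb1 : 0 ≤ lk (φ i) j := hlk (φ i) j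
      have hb2 : 0 ≤ g (qk (φ i) j) := le_trans hVlo.le (hg1 _)
      have hb3 : lk (φ i) j * g (qk (φ i) j) ≤ (li j + δ) * (g (qi j) + δ) :=
        mul_le_mul hi2.le hi1.le hb2 (by linarith [hli j])
      have hb4 : g (qi j) ≤ Vhi := hg2 _
      have hb5 : 0 ≤ li j := hli j
      have hb6 : li j ≤ 1 := hli1 j
      nlinarith
    have hall : ∀ᶠ i in Filter.atTop,
        ∑ j, lk (φ i) j * g (qk (φ i) j) ≤ ∑ j, (li j * g (qi j) + ε / h) := by
      filter_upwards [Filter.eventually_all.2 claim] with i hi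
      exact Finset.sum_le_sum fun j _ => hi j
    obtain ⟨i, hi⟩ := hall.exists
    have hs1 : y' < ∑ j, lk (φ i) j * g (qk (φ i) j) := by
      rw [← hrep (φ i) g]
      exact hky (φ i)
    have hs2 : ∑ j, (li j * g (qi j) + ε / h) = ei.expect g + ε := by
      rw [Finset.sum_add_distrib, hei_expect g, Finset.sum_const, Finset.card_univ,
        Fintype.card_fin, nsmul_eq_mul, mul_div_cancel₀]
      exact ne_of_gt hhR
    linarith
  have hfinal : ei.expect g ≤ W p := le_ciSup (hbddW p) ⟨ei, heiF, heiσ⟩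
  linarith

end Aux6
/-- Lemma 6 (lem-upper-semicont), first part: under Assumption 1, every v_n is
upper semicontinuous. -/
theorem lem_upper_semicont_vN {Ω : Type*} [Fintype Ω] [Nonempty Ω]
    (F : Set (SPExp Ω)) (hTF : Trivials Ω ⊆ F)
    (v : Belief Ω → ℝ) (Vlo Vhi : ℝ) (hVlo : 0 < Vlo) (hVV : Vlo ≤ Vhi)
    (hvlo : ∀ p, Vlo ≤ v p) (hvhi : ∀ p, v p ≤ Vhi)
    (husc : UpperSemicontinuous v)
    (h : ℕ) (hA1 : Assumption1 F h) :
    ∀ n : ℕ, UpperSemicontinuous (vN F v n) := by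
  intro n
  induction n with
  | zero =>
    have h0 : vN F v 0 = v := by
      funext p
      haveI : Nonempty (SeqP F p) := ⟨trivS hTF p⟩
      exact ciSup_const
    rw [h0]
    exact husc
  | succ n ih =>
    have hs : vN F v (n + 1) =
        fun p => ⨆ e : {e : SPExp Ω // e ∈ F ∧ e.sigma = p}, e.1.expect (vN F v n) :=
      funext fun p => vN_succ hTF v hvlo hvhi n p
    rw [hs]
    exact usc_step hTF hVlo (fun p => le_vN hTF hvlo hvhi n p)
      (fun p => vN_le hTF hvhi n p) ih h hA1
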